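/- arXiv:2302.10060 — 4 statements merged into one kernel-verified Lean document; each statement's English description precedes it below -/
import Mathlib

section
/- For every binary word w and every integer k ≥ 1, one has 2·ρ(w·0^k·1) = ρ(w) + ρ(w·0^{k−1}·1) in ℚ. (This is Case 1 of the proposition that the dyadic rationals a, b, c of the three regions around any bifurcation of a binary tree satisfy 2b = a + c.) -/
/-- `ρ(a₁ ⋯ aₙ) = Σ_{i=1}^n aᵢ / 2^i`, defined recursively on the binary word. -/
def rho : List Bool → ℚ
  | [] => 0
  | a :: t => ((if a then 1 else 0) + rho t) / 2

lemma rho_append (w v : List Bool) : rho (w ++ v) = rho w + rho v / 2 ^ w.length := by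
  induction w with
  | nil => simp [rho]
  | cons a t ih => simp [rho, ih]; ring

/-- For every binary word `w` and every integer `k ≥ 1`,
`2 · ρ(w · 0^k · 1) = ρ(w) + ρ(w · 0^{k−1} · 1)`. -/
theorem two_mul_rho_append_zeros_one (w : List Bool) (k : ℕ) (hk : 1 ≤ k) :
    2 * rho (w ++ List.replicate k false ++ [true]) =
      rho w + rho (w ++ List.replicate (k - 1) false ++ [true]) := by
  obtain ⟨m, rfl⟩ := Nat.exists_eq_add_of_le hk
  rw [List.append_assoc, List.append_assoc, rho_append w, rho_append w,
    show List.replicate (1 + m) false ++ [true]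
      = false :: (List.replicate m false ++ [true]) by simp [List.replicate_add],
    Nat.add_sub_cancel_left, show rho (false :: (List.replicate m false ++ [true]))
      = (0 + rho (List.replicate m false ++ [true])) / 2 from rfl]
  ring
end

section
/- For every binary word w and every integer k ≥ 0, one has 2·ρ(w·0·1^{k+1}) = ρ(w·0·1^k) + ρ(w·1) in ℚ. (This is Case 2 of the proposition that the dyadic rationals a, b, c of the three regions around any bifurcation of a binary tree satisfy 2b = a + c.) -/
lemma rho_replicate_true (k : ℕ) : rho (List.replicate k true) = 1 - (1/2)^k := by
  induction k with
  | zero => simp [rho]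
  | succ n ih =>
    rw [List.replicate_succ]
    simp [rho, ih]
    ring

/-- For every binary word `w` and every integer `k ≥ 0`,
`2 · ρ(w · 0 · 1^{k+1}) = ρ(w · 0 · 1^k) + ρ(w · 1)`. -/
theorem two_mul_rho_append_zero_ones (w : List Bool) (k : ℕ) :
    2 * rho (w ++ [false] ++ List.replicate (k + 1) true) =
      rho (w ++ [false] ++ List.replicate k true) + rho (w ++ [true]) := by
  induction w with
  | nil =>
    simp [rho, rho_replicate_true]
    ring
  | cons a t ih =>
    simp only [List.cons_append, rho]
    rw [← add_div]
    field_simp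
    simp only [List.append_assoc, List.singleton_append] at ih
    cases a <;> simp <;> linarith
end

section
/- Let S be a complete prefix code with lexicographic enumeration u₀ < u₁ < ⋯ < u_{n−1}. Then ρ(u₀) = 0, ρ(u_{i+1}) = ρ(u_i) + 2^{−|u_i|} for every 0 ≤ i ≤ n−2, and ρ(u_{n−1}) + 2^{−|u_{n−1}|} = 1. (The leaves of a binary tree, listed left to right, correspond to a subdivision of [0,1] into standard dyadic intervals whose left endpoints are the ρ-values of the leaves.) -/
lemma rho_nonneg (u : List Bool) : 0 ≤ rho u := by
  induction u with
  | nil => simp [rho]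
  | cons a t ih => cases a <;> simp [rho] <;> linarith

lemma rho_le (u : List Bool) : rho u + (2⁻¹ : ℚ) ^ u.length ≤ 1 := by
  induction u with
  | nil => simp [rho]
  | cons a t ih =>
    cases a <;> norm_num [rho, pow_succ] <;> nlinarith [ih]

lemma rho_key : ∀ u v : List Bool, u < v → ¬ u <+: v →
    rho u + (2⁻¹ : ℚ) ^ u.length ≤ rho v := by
  intro u
  induction u with
  | nil => intro v _ hp; exact absurd List.nil_prefix hp
  | cons a u' ih =>
    intro v hlt hp
    cases v with
    | nil => cases hlt
    | cons b v' =>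
      cases hlt with
      | rel h =>
        obtain ⟨ha, hb⟩ := Bool.lt_iff.mp h
        subst ha; subst hb
        have h1 := rho_le u'
        have h2 := rho_nonneg v'
        norm_num [rho, pow_succ]
        nlinarith
      | cons h3 =>
        have hp' : ¬ u' <+: v' := fun h => hp (List.cons_prefix_cons.mpr ⟨rfl, h⟩)
        have := ih v' h3 hp'
        cases a <;> norm_num [rho, pow_succ] <;> nlinarith

lemma sum_map_getD {α β : Type*} [AddCommMonoid β] (L : List α) (f : α → β) (d : α) :
    (L.map f).sum = ∑ i ∈ Finset.range L.length, f (L.getD i d) := by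
  induction L with
  | nil => simp
  | cons a t ih => simp [Finset.sum_range_succ', ih, add_comm]

/-- Let `S` be a complete prefix code, presented as the list `L` of its elements in
(strictly increasing) lexicographic order: `L` is nonempty, sorted, prefix-free, and
`Σ_{u ∈ L} 2^{−|u|} = 1`.  Then `ρ(u₀) = 0`, `ρ(u_{i+1}) = ρ(u_i) + 2^{−|u_i|}` for
`0 ≤ i ≤ n−2`, and `ρ(u_{n−1}) + 2^{−|u_{n−1}|} = 1`. -/
theorem rho_of_complete_prefix_code (L : List (List Bool)) (hne : L ≠ [])
    (hsorted : L.Pairwise (· < ·))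
    (hprefixfree : ∀ u ∈ L, ∀ v ∈ L, u ≠ v → ¬ u <+: v)
    (hsum : (L.map fun u => ((2 : ℚ)⁻¹) ^ u.length).sum = 1) :
    rho (L.getD 0 []) = 0 ∧
      (∀ i : ℕ, i + 1 < L.length →
        rho (L.getD (i + 1) []) = rho (L.getD i []) + ((2 : ℚ)⁻¹) ^ (L.getD i []).length) ∧
      rho (L.getD (L.length - 1) []) + ((2 : ℚ)⁻¹) ^ (L.getD (L.length - 1) []).length = 1 := by
  set n := L.length with hn
  have hn0 : 0 < n := List.length_pos_iff.mpr hne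
  set g : ℕ → ℚ := fun i => rho (L.getD i []) with hg
  set w : ℕ → ℚ := fun i => ((2 : ℚ)⁻¹) ^ (L.getD i []).length with hw
  -- consecutive inequality
  have hB : ∀ i, i + 1 < n → g i + w i ≤ g (i + 1) := by
    intro i hi
    have hi' : i < n := Nat.lt_of_succ_lt hi
    have hlt : L.getD i [] < L.getD (i + 1) [] := by
      rw [List.getD_eq_getElem L [] hi', List.getD_eq_getElem L [] hi]
      exact hsorted.sortedLT.strictMono_get (show (⟨i, hi'⟩ : Fin n) < ⟨i + 1, hi⟩ from Nat.lt_succ_self i)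
    have hmem1 : L.getD i [] ∈ L := by
      rw [List.getD_eq_getElem L [] hi']; exact List.getElem_mem hi'
    have hmem2 : L.getD (i + 1) [] ∈ L := by
      rw [List.getD_eq_getElem L [] hi]; exact List.getElem_mem hi
    exact rho_key _ _ hlt (hprefixfree _ hmem1 _ hmem2 (ne_of_lt hlt))
  -- slack
  set s : ℕ → ℚ := fun i => g (i + 1) - g i - w i with hs
  have hs_nonneg : ∀ i ∈ Finset.range (n - 1), 0 ≤ s i := by
    intro i hi
    have : i + 1 < n := by
      have := Finset.mem_range.mp hi; omega
    have := hB i this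
    simp only [hs]; linarith
  have htel : ∑ i ∈ Finset.range (n - 1), (w i + s i) = g (n - 1) - g 0 := by
    have h1 : ∀ i, w i + s i = g (i + 1) - g i := by intro i; simp [hs]
    simp only [h1]
    exact Finset.sum_range_sub g (n - 1)
  have hsplit : ∑ i ∈ Finset.range n, w i
      = (∑ i ∈ Finset.range (n - 1), w i) + w (n - 1) := by
    conv_lhs => rw [show n = (n - 1) + 1 by omega]
    exact Finset.sum_range_succ w (n - 1)
  have hsum' : ∑ i ∈ Finset.range n, w i = 1 := by
    rw [← hsum, sum_map_getD L _ []]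
  have hC : g (n - 1) + w (n - 1) ≤ 1 := rho_le _
  have hA : 0 ≤ g 0 := rho_nonneg _
  have hS : 0 ≤ ∑ i ∈ Finset.range (n - 1), s i := Finset.sum_nonneg hs_nonneg
  have hdist : ∑ i ∈ Finset.range (n - 1), (w i + s i)
      = (∑ i ∈ Finset.range (n - 1), w i) + ∑ i ∈ Finset.range (n - 1), s i :=
    Finset.sum_add_distrib
  -- main equalities
  have key : g 0 = 0 ∧ (∑ i ∈ Finset.range (n - 1), s i) = 0 ∧ g (n - 1) + w (n - 1) = 1 := by
    constructor
    · linarith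
    constructor
    · linarith
    · linarith
  obtain ⟨k1, k2, k3⟩ := key
  refine ⟨k1, ?_, k3⟩
  intro i hi
  have hmem : i ∈ Finset.range (n - 1) := Finset.mem_range.mpr (by omega)
  have : s i = 0 := (Finset.sum_eq_zero_iff_of_nonneg hs_nonneg).mp k2 i hmem
  have : g (i + 1) = g i + w i := by simp only [hs] at this; linarith
  exact this
end

section
/- Let q ≥ 1 be an integer and let S be a complete prefix code such that the length of every element of S is a positive multiple of q. Then there exist N ≥ 0 and a sequence of complete prefix codes C₀, C₁, …, C_N such that C₀ is the set of all binary words of length q, C_N = S, and for each j there is some u ∈ C_j with C_{j+1} = (C_j \ {u}) ∪ {u·v : v a binary word of length q}. (Every binary tree all of whose leaf lengths are positive multiples of q is obtained by attaching copies of the complete binary tree T_q of depth q.) -/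
/-- The finite set of all binary words of length `n`. -/
def wordsOfLength : ℕ → Finset (List Bool)
  | 0 => {[]}
  | n + 1 => (wordsOfLength n).image (List.cons false) ∪ (wordsOfLength n).image (List.cons true)

/-- A complete prefix code: a finite nonempty set `S` of binary words such that no element
is a (proper) prefix of another and `Σ_{u ∈ S} 2^{−|u|} = 1`. -/
def IsCompletePrefixCode (S : Finset (List Bool)) : Prop :=
  S.Nonempty ∧ (∀ u ∈ S, ∀ v ∈ S, u ≠ v → ¬ u <+: v) ∧
    ∑ u ∈ S, ((2 : ℚ)⁻¹) ^ u.length = 1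


lemma mem_wordsOfLength (n : ℕ) (x : List Bool) : x ∈ wordsOfLength n ↔ x.length = n := by
  induction n generalizing x with
  | zero => simp [wordsOfLength, List.length_eq_zero_iff]
  | succ n ih =>
    cases x with
    | nil => simp [wordsOfLength]
    | cons b t => cases b <;> simp [wordsOfLength, ih]

lemma card_wordsOfLength (n : ℕ) : (wordsOfLength n).card = 2 ^ n := by
  induction n with
  | zero => simp [wordsOfLength]
  | succ n ih =>
    have hdisj : Disjoint ((wordsOfLength n).image (List.cons false))
        ((wordsOfLength n).image (List.cons true)) := by
      simp only [Finset.disjoint_left, Finset.mem_image]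
      rintro a ⟨x, hx, rfl⟩ ⟨y, hy, h⟩
      simp at h
    rw [wordsOfLength, Finset.card_union_of_disjoint hdisj,
      Finset.card_image_of_injective _ (by intro a b h; simpa using h),
      Finset.card_image_of_injective _ (by intro a b h; simpa using h), ih]
    ring

lemma exists_prefix_mem (S : Finset (List Bool)) (hS : IsCompletePrefixCode S)
    (L : ℕ) (hL : ∀ u ∈ S, u.length ≤ L) (x : List Bool) (hx : x.length = L) :
    ∃ s ∈ S, s <+: x := by
  obtain ⟨hne, hpf, hkraft⟩ := hS
  set U : Finset (List Bool) := S.biUnion (fun s => (wordsOfLength (L - s.length)).image (s ++ ·)) with hU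
  have hinj : ∀ s : List Bool, Function.Injective (s ++ ·) := by
    intro s a b h; simpa using h
  have hdisj : ∀ s ∈ S, ∀ t ∈ S, s ≠ t →
      Disjoint ((wordsOfLength (L - s.length)).image (s ++ ·))
        ((wordsOfLength (L - t.length)).image (t ++ ·)) := by
    intro s hs t ht hst
    simp only [Finset.disjoint_left, Finset.mem_image]
    rintro a ⟨y, hy, rfl⟩ ⟨z, hz, h⟩
    have h1 : s <+: s ++ y := List.prefix_append s y
    have h2 : t <+: s ++ y := h ▸ List.prefix_append t z
    rcases le_total s.length t.length with hle | hle
    · exact hpf s hs t ht hst (List.prefix_of_prefix_length_le h1 h2 hle)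
    · exact hpf t ht s hs (Ne.symm hst) (List.prefix_of_prefix_length_le h2 h1 hle)
  have hsub : U ⊆ wordsOfLength L := by
    intro a ha
    simp only [hU, Finset.mem_biUnion, Finset.mem_image] at ha
    obtain ⟨s, hs, y, hy, rfl⟩ := ha
    rw [mem_wordsOfLength] at hy ⊢
    rw [List.length_append, hy]
    have := hL s hs
    omega
  have hcard : U.card = 2 ^ L := by
    rw [hU, Finset.card_biUnion hdisj]
    have : ∀ s ∈ S, ((wordsOfLength (L - s.length)).image (s ++ ·)).card = 2 ^ (L - s.length) := by
      intro s hs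
      rw [Finset.card_image_of_injective _ (hinj s), card_wordsOfLength]
    rw [Finset.sum_congr rfl this]
    have hq : ((∑ s ∈ S, 2 ^ (L - s.length) : ℕ) : ℚ) = 2 ^ L := by
      push_cast
      have : ∀ s ∈ S, ((2 : ℚ)) ^ (L - s.length) = 2 ^ L * (2 : ℚ)⁻¹ ^ s.length := by
        intro s hs
        have h1 : L - s.length + s.length = L := Nat.sub_add_cancel (hL s hs)
        have : (2 : ℚ) ^ (L - s.length) * 2 ^ s.length = 2 ^ L := by
          rw [← pow_add, h1]
        field_simp
        rw [← this, one_div, inv_pow, mul_assoc, mul_inv_cancel₀ (by positivity), mul_one]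
      rw [Finset.sum_congr rfl this, ← Finset.mul_sum, hkraft, mul_one]
    exact_mod_cast hq
  have hUeq : U = wordsOfLength L := by
    apply Finset.eq_of_subset_of_card_le hsub
    rw [hcard, card_wordsOfLength]
  have hxU : x ∈ U := by rw [hUeq, mem_wordsOfLength]; exact hx
  simp only [hU, Finset.mem_biUnion, Finset.mem_image] at hxU
  obtain ⟨s, hs, y, hy, rfl⟩ := hxU
  exact ⟨s, hs, List.prefix_append s y⟩

lemma main_aux (q : ℕ) (hq : 1 ≤ q) : ∀ n : ℕ, ∀ S : Finset (List Bool), S.card ≤ n →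
    IsCompletePrefixCode S → (∀ u ∈ S, ∃ k : ℕ, 0 < k ∧ u.length = k * q) →
    ∃ (N : ℕ) (C : ℕ → Finset (List Bool)),
      (∀ j ≤ N, IsCompletePrefixCode (C j)) ∧
      C 0 = wordsOfLength q ∧
      C N = S ∧
      ∀ j < N, ∃ u ∈ C j,
        C (j + 1) = (C j \ {u}) ∪ (wordsOfLength q).image (fun v => u ++ v) := by
  intro n
  induction n with
  | zero =>
    intro S hcard hS _
    exact absurd (Finset.card_pos.mpr hS.1) (by omega)
  | succ n ih =>
    intro S hcard hS hlen
    obtain ⟨u, hu, hmax⟩ := S.exists_max_image List.length hS.1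
    obtain ⟨k, hk, hkL⟩ := hlen u hu
    set L := u.length with hL
    by_cases hcase : L = q
    · -- base case: S = wordsOfLength q
      have hsub : S ⊆ wordsOfLength q := by
        intro s hs
        rw [mem_wordsOfLength]
        obtain ⟨k', hk', hks⟩ := hlen s hs
        have hle : k' * q ≤ 1 * q := by
          rw [one_mul]
          calc k' * q = s.length := hks.symm
          _ ≤ L := hmax s hs
          _ = q := hcase
        have : k' ≤ 1 := Nat.le_of_mul_le_mul_right hle (by omega)
        have : k' = 1 := by omega
        rw [hks, this, one_mul]
      have hScard : S.card = 2 ^ q := by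
        have h1 : ∑ s ∈ S, ((2:ℚ)⁻¹) ^ s.length = S.card * ((2:ℚ)⁻¹)^q := by
          rw [Finset.sum_congr rfl (fun s hs => by
            rw [(mem_wordsOfLength q s).mp (hsub hs)])]
          simp [Finset.sum_const]
        have h2 := hS.2.2
        rw [h1] at h2
        have h3 : (S.card : ℚ) = 2 ^ q := by
          field_simp at h2
          rw [one_div, inv_pow, ← div_eq_mul_inv, div_eq_one_iff_eq (by positivity)] at h2
          exact h2
        exact_mod_cast h3
      have hSeq : S = wordsOfLength q :=
        Finset.eq_of_subset_of_card_le hsub (by rw [card_wordsOfLength, ← hScard])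
      exact ⟨0, fun _ => S, fun j _ => hS, hSeq.symm ▸ rfl, rfl, by omega⟩
    · -- inductive step
      have hk2 : 2 ≤ k := by
        rcases k with _ | _ | k
        · omega
        · exfalso; apply hcase; omega
        · omega
      have hLq : q < L := by
        rw [hkL]; nlinarith
      set w := u.take (L - q) with hwdef
      have hw_len : w.length = L - q := by
        rw [hwdef, List.length_take]; omega
      have hwu : w <+: u := List.take_prefix _ _
      set I := (wordsOfLength q).image (fun v => w ++ v) with hI
      have happinj : Function.Injective (fun v : List Bool => w ++ v) := by
        intro a b h; simpa using h
      have hIS : I ⊆ S := by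
        intro a ha
        simp only [hI, Finset.mem_image] at ha
        obtain ⟨v, hv, rfl⟩ := ha
        rw [mem_wordsOfLength] at hv
        have hlen' : (w ++ v).length = L := by
          rw [List.length_append, hw_len, hv]; omega
        obtain ⟨s, hs, hpre⟩ := exists_prefix_mem S hS L (fun x hx => hmax x hx) (w ++ v) hlen'
        obtain ⟨k', hk', hks⟩ := hlen s hs
        have hsle : s.length ≤ L := hlen' ▸ hpre.length_le
        by_cases hsl : s.length = L
        · have : s = w ++ v := hpre.eq_of_length (by rw [hsl, hlen'])
          exact this ▸ hs
        · exfalso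
          have hk'lt : k' * q < k * q := by
            rw [← hks, ← hkL]; omega
          have hk'k : k' < k := Nat.lt_of_mul_lt_mul_right hk'lt
          have hslw : s.length ≤ w.length := by
            rw [hw_len, hks, hkL]
            calc k' * q ≤ (k-1) * q := Nat.mul_le_mul_right q (by omega)
            _ = k * q - q := by rw [Nat.sub_mul, one_mul]
          have hsw : s <+: w :=
            List.prefix_of_prefix_length_le hpre (List.prefix_append w v) hslw
          have hsu : s <+: u := hsw.trans hwu
          have hne : s ≠ u := fun h => hsl (by rw [h])
          exact hS.2.1 s hs u hu hne hsu
      have hwS : w ∉ S := by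
        intro h
        have hne : w ≠ u := by
          intro h'
          have := hw_len
          rw [h'] at this
          omega
        exact hS.2.1 w h u hu hne hwu
      set S' := (S \ I) ∪ {w} with hS'def
      have hwSI : w ∉ S \ I := by simp [hwS]
      have hIcard : I.card = 2 ^ q := by
        rw [hI, Finset.card_image_of_injective _ happinj, card_wordsOfLength]
      have hIcard_le : 2 ^ q ≤ S.card := hIcard ▸ Finset.card_le_card hIS
      have hS'card : S'.card = S.card - 2 ^ q + 1 := by
        rw [hS'def, Finset.card_union_of_disjoint (by simpa using hwSI),
          Finset.card_sdiff_of_subset hIS, hIcard, Finset.card_singleton]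
      have hcard' : S'.card ≤ n := by
        have h2q : 2 ≤ 2 ^ q := by
          calc (2:ℕ) = 2 ^ 1 := (pow_one 2).symm
          _ ≤ 2 ^ q := Nat.pow_le_pow_right (by omega) hq
        omega
      -- membership in S'
      have hmemS' : ∀ a, a ∈ S' ↔ (a ∈ S ∧ a ∉ I) ∨ a = w := by
        intro a
        simp only [hS'def, Finset.mem_union, Finset.mem_sdiff, Finset.mem_singleton]
      -- S' is a complete prefix code
      have hS'pc : IsCompletePrefixCode S' := by
        refine ⟨⟨w, (hmemS' w).mpr (Or.inr rfl)⟩, ?_, ?_⟩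
        · intro a ha b hb hab hpre
          rw [hmemS'] at ha hb
          rcases ha with ⟨haS, haI⟩ | rfl
          · rcases hb with ⟨hbS, hbI⟩ | rfl
            · exact hS.2.1 a haS b hbS hab hpre
            · -- a ∈ S, a <+: w
              have hau : a <+: u := hpre.trans hwu
              have hane : a ≠ u := by
                intro h
                have := hpre.length_le
                rw [h, hw_len] at this
                omega
              exact hS.2.1 a haS u hu hane hau
          · rcases hb with ⟨hbS, hbI⟩ | rfl
            · -- w <+: b, b ∈ S, b ∉ I
              have hbw : b ≠ w := fun h => hwS (h ▸ hbS)
              obtain ⟨t, rfl⟩ := hpre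
              have htne : t ≠ [] := by rintro rfl; simp at hbw
              obtain ⟨k'', hk'', hkb⟩ := hlen _ hbS
              have htq : q ≤ t.length := by
                have h1 : w.length + t.length = k'' * q := by
                  rw [← List.length_append, hkb]
                have h2 : (k-1) * q = L - q := by rw [Nat.sub_mul, one_mul, ← hkL]
                have h3 : t.length = k'' * q - (k-1)*q := by omega
                have h4 : k - 1 < k'' := by
                  by_contra hcon
                  have : k'' * q ≤ (k-1) * q := Nat.mul_le_mul_right q (by omega)
                  have ht0 : t.length = 0 := by omega
                  exact htne (List.length_eq_zero_iff.mp ht0)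
                rw [h3, ← Nat.sub_mul]
                calc q = 1 * q := (one_mul q).symm
                _ ≤ (k'' - (k-1)) * q := Nat.mul_le_mul_right q (by omega)
              set v0 := t.take q with hv0
              have hv0len : v0.length = q := by rw [hv0, List.length_take]; omega
              have hv0I : w ++ v0 ∈ I := by
                rw [hI, Finset.mem_image]
                exact ⟨v0, (mem_wordsOfLength q v0).mpr hv0len, rfl⟩
              have hv0pre : w ++ v0 <+: w ++ t :=
                (List.prefix_append_right_inj w).mpr (List.take_prefix q t)
              by_cases heq : w ++ v0 = w ++ t
              · exact hbI (heq ▸ hv0I)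
              · exact hS.2.1 (w ++ v0) (hIS hv0I) (w ++ t) hbS heq hv0pre
            · exact hab rfl
        · -- Kraft sum
          have hdisj : Disjoint (S \ I) ({w} : Finset (List Bool)) := by simpa using hwSI
          rw [hS'def, Finset.sum_union hdisj, Finset.sum_singleton]
          have hsd := Finset.sum_sdiff (f := fun u : List Bool => ((2:ℚ)⁻¹) ^ u.length) hIS
          have hIsum : ∑ a ∈ I, ((2:ℚ)⁻¹) ^ a.length = 2 ^ q * ((2:ℚ)⁻¹) ^ (w.length + q) := by
            rw [hI, Finset.sum_image (fun a _ b _ h => happinj h)]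
            rw [Finset.sum_congr rfl (fun v hv => by
              rw [List.length_append, (mem_wordsOfLength q v).mp hv])]
            simp [Finset.sum_const, card_wordsOfLength]
          have hIval : (2:ℚ) ^ q * ((2:ℚ)⁻¹) ^ (w.length + q) = ((2:ℚ)⁻¹) ^ w.length := by
            have h1 : (2:ℚ) ^ q * ((2:ℚ)⁻¹) ^ q = 1 := by
              rw [← mul_pow]; norm_num
            calc (2:ℚ) ^ q * ((2:ℚ)⁻¹) ^ (w.length + q)
                = ((2:ℚ) ^ q * ((2:ℚ)⁻¹) ^ q) * ((2:ℚ)⁻¹) ^ w.length := by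
                  rw [pow_add]; ring
            _ = ((2:ℚ)⁻¹) ^ w.length := by rw [h1, one_mul]
          have hSsum := hS.2.2
          rw [hIsum, hIval] at hsd
          have : ∑ a ∈ S \ I, ((2:ℚ)⁻¹) ^ a.length = 1 - ((2:ℚ)⁻¹) ^ w.length := by
            rw [← hSsum, ← hsd]; ring
          rw [this]; ring
      have hlen' : ∀ a ∈ S', ∃ k : ℕ, 0 < k ∧ a.length = k * q := by
        intro a ha
        rw [hmemS'] at ha
        rcases ha with ⟨haS, _⟩ | rfl
        · exact hlen a haS
        · refine ⟨k - 1, by omega, ?_⟩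
          rw [hw_len, hkL, Nat.sub_mul, one_mul]
      obtain ⟨N, C, hC, hC0, hCN, hstep⟩ := ih S' hcard' hS'pc hlen'
      refine ⟨N + 1, fun j => if j ≤ N then C j else S, ?_, ?_, ?_, ?_⟩
      · intro j hj
        by_cases h : j ≤ N
        · simpa [h] using hC j h
        · simpa [h] using hS
      · simpa using hC0
      · simp
      · intro j hj
        by_cases h : j < N
        · obtain ⟨u', hu', heq⟩ := hstep j h
          refine ⟨u', ?_, ?_⟩
          · simpa [Nat.le_of_lt h] using hu'
          · simp only []
            rw [if_pos (Nat.succ_le_of_lt h), if_pos (Nat.le_of_lt h)]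
            exact heq
        · have hjN : j = N := by omega
          subst hjN
          refine ⟨w, ?_, ?_⟩
          · simp only []
            rw [if_pos (le_refl _), hCN]
            exact (hmemS' w).mpr (Or.inr rfl)
          · simp only []
            rw [if_neg (by omega), if_pos (le_refl _), hCN]
            have h1 : S' \ {w} = S \ I := by
              ext a
              simp only [hS'def, Finset.mem_sdiff, Finset.mem_union, Finset.mem_singleton]
              constructor
              · rintro ⟨h2 | rfl, h3⟩
                · exact h2
                · exact absurd rfl h3
              · intro h2
                exact ⟨Or.inl h2, fun h3 => hwS (h3 ▸ h2.1)⟩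
            rw [h1, ← hI]
            exact (Finset.sdiff_union_of_subset hIS).symm

/-- Let `q ≥ 1` and let `S` be a complete prefix code all of whose elements have length a
positive multiple of `q`.  Then there are `N ≥ 0` and complete prefix codes
`C₀, C₁, …, C_N` such that `C₀` is the set of all binary words of length `q`, `C_N = S`,
and each `C_{j+1}` is obtained from `C_j` by replacing some `u ∈ C_j` with
`{u·v : |v| = q}` (attaching a copy of the complete binary tree of depth `q`). -/
theorem exists_chain_of_q_ary_expansions (q : ℕ) (hq : 1 ≤ q)
    (S : Finset (List Bool)) (hS : IsCompletePrefixCode S)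
    (hlen : ∀ u ∈ S, ∃ k : ℕ, 0 < k ∧ u.length = k * q) :
    ∃ (N : ℕ) (C : ℕ → Finset (List Bool)),
      (∀ j ≤ N, IsCompletePrefixCode (C j)) ∧
      C 0 = wordsOfLength q ∧
      C N = S ∧
      ∀ j < N, ∃ u ∈ C j,
        C (j + 1) = (C j \ {u}) ∪ (wordsOfLength q).image (fun v => u ++ v) := by
  exact main_aux q hq S.card S le_rfl hS hlen
end
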